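/- For |q| < 1 (or as formal power series in q), ∑_{π ∈ D} (−1)^{♯(π)} σ(π) q^{|π|} = −∑_{m≥1} m q^m ∏_{k≥m+1} (1−q^k), where the sum on the left ranges over all nonempty partitions into distinct parts. Equivalently, for each n ≥ 1 the signed sum ∑ (−1)^{♯(π)} σ(π), taken over distinct partitions π of n, equals minus the coefficient of q^n in ∑_{m≥1} m q^m (q^{m+1};q)_∞. -/

import Mathlib

open Finset

/-- The smallest part of a partition. -/
noncomputable def Nat.Partition.minPart {n : ℕ} (π : n.Partition) : ℕ :=
  sInf {i | i ∈ π.parts}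

open Filter Topology

section Core
variable {ι : Type*} [DecidableEq ι]

lemma finsetProd_summable_of_nonneg {g : ι → ℝ} (h0 : ∀ i, 0 ≤ g i) (hg : Summable g) :
    Summable (fun S : Finset ι => ∏ i ∈ S, g i) := by
  apply summable_of_sum_le (c := Real.exp (∑' i, g i))
    (fun S => Finset.prod_nonneg fun i _ => h0 i)
  intro u
  calc ∑ S ∈ u, ∏ i ∈ S, g i
      ≤ ∑ S ∈ (u.sup id).powerset, ∏ i ∈ S, g i := by
        apply Finset.sum_le_sum_of_subset_of_nonneg
        · intro S hS; exact Finset.mem_powerset.2 (Finset.le_sup (f := id) hS)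
        · intro S _ _; exact Finset.prod_nonneg fun i _ => h0 i
    _ ≤ ∏ i ∈ u.sup id, (1 + g i) := by
        rw [show (fun i => (1:ℝ) + g i) = fun i => g i + 1 by funext; ring,
          Finset.prod_add g (fun _ => 1) (u.sup id)]
        simp
    _ ≤ ∏ i ∈ u.sup id, Real.exp (g i) := by
        apply Finset.prod_le_prod
        · intro i _; linarith [h0 i]
        · intro i _; linarith [Real.add_one_le_exp (g i)]
    _ = Real.exp (∑ i ∈ u.sup id, g i) := (Real.exp_sum _ _).symm
    _ ≤ Real.exp (∑' i, g i) := Real.exp_le_exp.2 (Summable.sum_le_tsum _ (fun i _ => h0 i) hg)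

lemma finsetProd_summable_complex {g : ι → ℂ} (hg : Summable fun i => ‖g i‖) :
    Summable (fun S : Finset ι => ∏ i ∈ S, g i) := by
  apply Summable.of_norm_bounded (g := fun S : Finset ι => ∏ i ∈ S, ‖g i‖)
    (finsetProd_summable_of_nonneg (fun i => norm_nonneg _) hg)
  intro S
  simp [norm_prod]

lemma hasProd_one_add {g : ι → ℂ} (hg : Summable fun i => ‖g i‖) :
    HasProd (fun i => 1 + g i) (∑' S : Finset ι, ∏ i ∈ S, g i) := by
  have hsum := (finsetProd_summable_complex hg).hasSum
  have hpow : Tendsto (fun A : Finset ι => A.powerset) atTop atTop := by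
    apply Filter.tendsto_atTop_atTop.2
    intro b
    refine ⟨b.sup id, fun A hA S hS => ?_⟩
    exact Finset.mem_powerset.2 ((Finset.le_sup (f := id) hS).trans hA)
  have h2 := hsum.comp hpow
  have heq : (fun A : Finset ι => ∑ S ∈ A.powerset, ∏ i ∈ S, g i)
      = fun A : Finset ι => ∏ i ∈ A, (1 + g i) := by
    funext A
    rw [show (fun i => (1:ℂ) + g i) = fun i => g i + 1 by funext; ring,
      Finset.prod_add g (fun _ => 1) A]
    simp
  unfold HasProd
  rw [← heq]
  exact h2

lemma tprod_one_add_complex {g : ι → ℂ} (hg : Summable fun i => ‖g i‖) :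
    ∏' i, (1 + g i) = ∑' S : Finset ι, ∏ i ∈ S, g i :=
  (hasProd_one_add hg).tprod_eq

end Core

section Main

/-- shifted sum of a finset: the parts are `i+1` for `i ∈ S`. -/
def Nsum (S : Finset ℕ) : ℕ := ∑ i ∈ S, (i + 1)

/-- signed weight of a finset-partition -/
noncomputable def wgt (q : ℂ) (S : Finset ℕ) : ℂ :=
  (-1) ^ S.card * (if h : S.Nonempty then ((S.min' h : ℂ) + 1) else 0) * q ^ (Nsum S)

lemma wgt_empty (q : ℂ) : wgt q ∅ = 0 := by simp [wgt]

lemma min'_succ_le_Nsum (S : Finset ℕ) (h : S.Nonempty) : S.min' h + 1 ≤ Nsum S :=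
  Finset.single_le_sum (f := fun i => i + 1) (fun i _ => Nat.zero_le _) (S.min'_mem h)

lemma wgt_summable {q : ℂ} (hq : ‖q‖ < 1) : Summable (wgt q) := by
  set t : ℝ := (‖q‖ + 1) / 2 with ht
  have h0r : 0 ≤ ‖q‖ := norm_nonneg q
  have ht0 : 0 < t := by positivity
  have ht1 : t < 1 := by rw [ht]; linarith
  have hrt : ‖q‖ < t := by rw [ht]; linarith
  set x : ℝ := ‖q‖ / t with hx
  have hx0 : 0 ≤ x := by positivity
  have hx1 : x < 1 := by rw [hx, div_lt_one ht0]; exact hrt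
  have hxs : Summable (fun n : ℕ => (n : ℝ) * x ^ n) := by
    have := summable_pow_mul_geometric_of_norm_lt_one (R := ℝ) 1
      (by rwa [Real.norm_eq_abs, abs_of_nonneg hx0])
    simpa using this
  set C : ℝ := ∑' n : ℕ, (n : ℝ) * x ^ n with hC
  have hCle : ∀ n : ℕ, (n : ℝ) * x ^ n ≤ C := fun n =>
    Summable.le_tsum hxs n (fun m _ => by positivity)
  have hsummand : Summable (fun S : Finset ℕ => C * ∏ i ∈ S, t ^ (i + 1)) := by
    apply Summable.mul_left
    apply finsetProd_summable_of_nonneg (fun i => by positivity)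
    have : Summable (fun i : ℕ => t * t ^ i) :=
      (summable_geometric_of_lt_one ht0.le ht1).mul_left t
    simpa [pow_succ, mul_comm] using this
  apply Summable.of_norm_bounded hsummand
  intro S
  have hprod : ∏ i ∈ S, t ^ (i + 1) = t ^ (Nsum S) := by
    rw [Nsum, Finset.prod_pow_eq_pow_sum]
  have hC0 : 0 ≤ C := tsum_nonneg fun n => by positivity
  rcases S.eq_empty_or_nonempty with rfl | hS
  · rw [wgt_empty]
    simp only [norm_zero, Finset.prod_empty, mul_one]
    exact hC0
  · have hwn : ‖wgt q S‖ = ((S.min' hS : ℝ) + 1) * ‖q‖ ^ (Nsum S) := by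
      rw [wgt]
      rw [dif_pos hS]
      rw [norm_mul, norm_mul, norm_pow, norm_pow, norm_neg, norm_one, one_pow, one_mul]
      congr 1
      rw [show ((S.min' hS : ℂ) + 1) = ((S.min' hS + 1 : ℕ) : ℂ) by push_cast; ring]
      rw [Complex.norm_natCast]
      push_cast; ring
    rw [hwn, hprod]
    have h1 : ((S.min' hS : ℝ) + 1) ≤ (Nsum S : ℝ) := by
      exact_mod_cast min'_succ_le_Nsum S hS
    have hq' : ‖q‖ ^ Nsum S = x ^ Nsum S * t ^ Nsum S := by
      rw [← mul_pow, hx, div_mul_cancel₀]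
      exact ht0.ne'
    rw [hq']
    calc ((S.min' hS : ℝ) + 1) * (x ^ Nsum S * t ^ Nsum S)
        ≤ (Nsum S : ℝ) * (x ^ Nsum S * t ^ Nsum S) := by
          apply mul_le_mul_of_nonneg_right h1; positivity
      _ = ((Nsum S : ℝ) * x ^ Nsum S) * t ^ Nsum S := by ring
      _ ≤ C * t ^ Nsum S := by
          apply mul_le_mul_of_nonneg_right (hCle _); positivity

/-- the embedding `t ↦ m + 1 + t` -/
def emb (m : ℕ) : ℕ ↪ ℕ := ⟨fun t => m + 1 + t, fun a b h => by dsimp at h; omega⟩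

@[simp] lemma emb_apply (m t : ℕ) : emb m t = m + 1 + t := rfl

/-- the pairing of a minimum `m` and the rest of the finset, shifted -/
def psi (p : ℕ × Finset ℕ) : Finset ℕ := insert p.1 (p.2.map (emb p.1))

lemma not_mem_map_emb (m : ℕ) (T : Finset ℕ) : m ∉ T.map (emb m) := by
  simp [emb_apply]
  intro t _ h
  omega

lemma psi_card (m : ℕ) (T : Finset ℕ) : (psi (m, T)).card = T.card + 1 := by
  rw [psi, Finset.card_insert_of_notMem (not_mem_map_emb m T), Finset.card_map]

lemma psi_nonempty (m : ℕ) (T : Finset ℕ) : (psi (m, T)).Nonempty :=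
  ⟨m, Finset.mem_insert_self _ _⟩

lemma psi_min' (m : ℕ) (T : Finset ℕ) : (psi (m, T)).min' (psi_nonempty m T) = m := by
  apply le_antisymm
  · exact Finset.min'_le _ _ (Finset.mem_insert_self _ _)
  · apply Finset.le_min'
    intro y hy
    rw [psi, Finset.mem_insert] at hy
    rcases hy with rfl | hy
    · exact le_refl _
    · simp [emb_apply] at hy
      omega

lemma psi_Nsum (m : ℕ) (T : Finset ℕ) :
    Nsum (psi (m, T)) = (m + 1) + ∑ t ∈ T, (m + 2 + t) := by
  rw [Nsum, psi, Finset.sum_insert (not_mem_map_emb m T), Finset.sum_map]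
  congr 1
  apply Finset.sum_congr rfl
  intro t _
  simp [emb_apply]
  omega

lemma mem_psi_le (m a : ℕ) (T : Finset ℕ) (ha : a ∈ psi (m, T)) : m ≤ a := by
  rw [psi, Finset.mem_insert] at ha
  rcases ha with rfl | ha
  · exact le_refl _
  · simp [emb_apply] at ha
    omega

lemma psi_injective : Function.Injective psi := by
  rintro ⟨m, T⟩ ⟨m', T'⟩ h
  have hm : m = m' := by
    apply le_antisymm
    · exact mem_psi_le m m' T (h ▸ Finset.mem_insert_self m' _)
    · exact mem_psi_le m' m T' (h ▸ Finset.mem_insert_self m _)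
  subst hm
  have h2 : T.map (emb m) = T'.map (emb m) := by
    simp only [psi] at h
    rw [← Finset.erase_insert (not_mem_map_emb m T), h,
      Finset.erase_insert (not_mem_map_emb m T')]
  have := Finset.map_injective (emb m) h2
  simp [this]

lemma psi_surj_on_nonempty (S : Finset ℕ) (hS : S.Nonempty) : ∃ p, psi p = S := by
  set m := S.min' hS with hm
  refine ⟨(m, (S.erase m).image (fun x => x - (m + 1))), ?_⟩
  ext a
  simp only [psi, Finset.mem_insert, Finset.mem_map, Finset.mem_image, emb_apply,
    Function.Embedding.coeFn_mk]
  constructor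
  · rintro (rfl | ⟨t, ⟨x, hx, rfl⟩, rfl⟩)
    · exact S.min'_mem hS
    · rw [Finset.mem_erase] at hx
      have hxm : m ≤ x := Finset.min'_le _ _ hx.2
      have : m + 1 + (x - (m + 1)) = x := by omega
      rw [this]; exact hx.2
  · intro ha
    by_cases h : a = m
    · exact Or.inl h
    · right
      have hma : m ≤ a := Finset.min'_le _ _ ha
      refine ⟨a - (m + 1), ⟨a, Finset.mem_erase.2 ⟨h, ha⟩, rfl⟩, by omega⟩

lemma wgt_psi (q : ℂ) (m : ℕ) (T : Finset ℕ) :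
    wgt q (psi (m, T)) =
      -(((m : ℂ) + 1) * q ^ (m + 1) * ∏ t ∈ T, (-(q ^ (m + 2 + t)))) := by
  have hprod : ∏ t ∈ T, (-(q ^ (m + 2 + t))) = (-1) ^ T.card * q ^ (∑ t ∈ T, (m + 2 + t)) := by
    rw [show (fun t => -(q ^ (m + 2 + t))) = fun t => (-1) * q ^ (m + 2 + t) by funext; ring]
    rw [Finset.prod_mul_distrib, Finset.prod_const, Finset.prod_pow_eq_pow_sum]
  rw [wgt, dif_pos (psi_nonempty m T), psi_min', psi_card, psi_Nsum, hprod, pow_add, pow_succ]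
  ring

/-- the partition associated to a finset with `Nsum S = n` -/
def toPart (n : ℕ) (S : Finset ℕ) (h : Nsum S = n) : n.Partition where
  parts := S.val.map (· + 1)
  parts_pos := by
    intro i hi
    rw [Multiset.mem_map] at hi
    obtain ⟨j, _, rfl⟩ := hi
    omega
  parts_sum := by rw [← h, Nsum, Finset.sum_eq_multiset_sum]

lemma toPart_mem_distincts (n : ℕ) (S : Finset ℕ) (h : Nsum S = n) :
    toPart n S h ∈ Nat.Partition.distincts n := by
  rw [Nat.Partition.distincts, Finset.mem_filter]
  refine ⟨Finset.mem_univ _, ?_⟩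
  exact S.nodup.map (fun a b hab => by omega)

lemma toPart_card (n : ℕ) (S : Finset ℕ) (h : Nsum S = n) :
    Multiset.card (toPart n S h).parts = S.card := by
  simp [toPart]

lemma toPart_minPart (n : ℕ) (S : Finset ℕ) (h : Nsum S = n) :
    (toPart n S h).minPart = if hS : S.Nonempty then S.min' hS + 1 else 0 := by
  rw [Nat.Partition.minPart]
  split_ifs with hS
  · apply IsLeast.csInf_eq
    constructor
    · show S.min' hS + 1 ∈ {i | i ∈ (toPart n S h).parts}
      simp only [toPart, Set.mem_setOf_eq, Multiset.mem_map]
      exact ⟨S.min' hS, (S.min'_mem hS), rfl⟩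
    · intro i hi
      simp only [toPart, Set.mem_setOf_eq, Multiset.mem_map] at hi
      obtain ⟨j, hj, rfl⟩ := hi
      have : S.min' hS ≤ j := Finset.min'_le _ _ hj
      omega
  · rw [Finset.not_nonempty_iff_eq_empty] at hS
    subst hS
    simp [toPart]

lemma toPart_bijective (n : ℕ) :
    Function.Bijective (fun S : (Nsum ⁻¹' {n} : Set (Finset ℕ)) =>
      (⟨toPart n S.1 S.2, toPart_mem_distincts n S.1 S.2⟩ :
        {π : n.Partition // π ∈ Nat.Partition.distincts n})) := by
  constructor
  · rintro ⟨S, hS⟩ ⟨S', hS'⟩ h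
    simp only [Subtype.mk.injEq] at h
    have hparts : S.val.map (· + 1) = S'.val.map (· + 1) := congrArg Nat.Partition.parts h
    have : S.val = S'.val := Multiset.map_injective (fun a b hab => by omega) hparts
    exact Subtype.ext (Finset.val_injective this)
  · rintro ⟨π, hπ⟩
    have hnodup : π.parts.Nodup := (Finset.mem_filter.1 hπ).2
    have hnodup' : (π.parts.map (· - 1)).Nodup := by
      refine Multiset.Nodup.map_on ?_ hnodup
      intro a ha b hb hab
      have := π.parts_pos ha
      have := π.parts_pos hb
      omega
    set S : Finset ℕ := ⟨π.parts.map (· - 1), hnodup'⟩ with hSdef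
    have key : S.val.map (· + 1) = π.parts := by
      rw [hSdef]
      simp only [Multiset.map_map]
      calc π.parts.map ((· + 1) ∘ (· - 1)) = π.parts.map id := by
            apply Multiset.map_congr rfl
            intro x hx
            have := π.parts_pos hx
            simp only [Function.comp_apply, id_eq]
            omega
        _ = π.parts := Multiset.map_id _
    have hN : Nsum S = n := by
      rw [Nsum, Finset.sum_eq_multiset_sum]
      show (S.val.map (· + 1)).sum = n
      rw [key, π.parts_sum]
    refine ⟨⟨S, hN⟩, ?_⟩
    apply Subtype.ext
    apply Nat.Partition.ext
    exact key

lemma fiber_sum (q : ℂ) (n : ℕ) :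
    ∑' S : (Nsum ⁻¹' {n} : Set (Finset ℕ)), wgt q S.1
      = (∑ π ∈ Nat.Partition.distincts n,
          (-1 : ℂ) ^ (Multiset.card π.parts) * (π.minPart : ℂ)) * q ^ n := by
  set e : (Nsum ⁻¹' {n} : Set (Finset ℕ)) ≃
      {π : n.Partition // π ∈ Nat.Partition.distincts n} :=
    Equiv.ofBijective _ (toPart_bijective n) with he
  have h1 : ∀ S : (Nsum ⁻¹' {n} : Set (Finset ℕ)),
      wgt q S.1 = (fun π : {π : n.Partition // π ∈ Nat.Partition.distincts n} =>
        (-1 : ℂ) ^ (Multiset.card π.1.parts) * (π.1.minPart : ℂ) * q ^ n) (e S) := by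
    rintro ⟨S, hS⟩
    have hN : Nsum S = n := hS
    simp only [he, Equiv.ofBijective_apply]
    change wgt q S = (-1 : ℂ) ^ Multiset.card (toPart n S hN).parts * ((toPart n S hN).minPart : ℂ) * q ^ n
    rw [toPart_card n S, toPart_minPart n S]
    rw [wgt, hN]
    congr 1
    congr 1
    split_ifs with h
    · push_cast; ring
    · simp
  rw [tsum_congr h1]
  rw [Equiv.tsum_eq e (fun π : {π : n.Partition // π ∈ Nat.Partition.distincts n} =>
    (-1 : ℂ) ^ (Multiset.card π.1.parts) * (π.1.minPart : ℂ) * q ^ n)]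
  rw [Finset.sum_mul]
  exact Finset.tsum_subtype (Nat.Partition.distincts n)
    (fun π => (-1 : ℂ) ^ (Multiset.card π.parts) * (π.minPart : ℂ) * q ^ n)

end Main

/-- `∑_{π ∈ D} (−1)^{♯(π)} σ(π) q^{|π|} = −∑_{m≥1} m qᵐ ∏_{k≥m+1} (1−qᵏ)` for `|q| < 1`,
where `D` is the set of nonempty partitions into distinct parts, `σ(π)` is the smallest
part, `♯(π)` the number of parts and `|π|` the sum of the parts of `π`.  The left-hand
side is written as a power series in `q` whose `n`-th coefficient is the signed sum
`∑ (−1)^{♯(π)} σ(π)` over all distinct partitions `π` of `n` (the empty partition of `0`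
contributes `0`). -/
theorem signed_sum_smallest_parts_distinct (q : ℂ) (hq : ‖q‖ < 1) :
    ∑' n : ℕ,
        (∑ π ∈ Nat.Partition.distincts n,
          (-1 : ℂ) ^ (Multiset.card π.parts) * (π.minPart : ℂ)) * q ^ n =
      -∑' m : ℕ, ((m : ℂ) + 1) * q ^ (m + 1) *
        ∏' k : ℕ, (1 - q ^ (m + 1 + (k + 1))) := by
  have hsum := wgt_summable hq
  set W : ℂ := ∑' S : Finset ℕ, wgt q S with hW
  -- left-hand side
  have hfib := hsum.hasSum.tsum_fiberwise Nsum
  have hLf : (fun n : ℕ => ∑' S : (Nsum ⁻¹' {n} : Set (Finset ℕ)), wgt q S.1)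
      = fun n : ℕ => (∑ π ∈ Nat.Partition.distincts n,
          (-1 : ℂ) ^ (Multiset.card π.parts) * (π.minPart : ℂ)) * q ^ n :=
    funext fun n => fiber_sum q n
  rw [hLf] at hfib
  rw [hfib.tsum_eq]
  -- right-hand side
  have hpsi : Summable (fun p : ℕ × Finset ℕ => wgt q (psi p)) :=
    hsum.comp_injective psi_injective
  have hrange : ∑' p : ℕ × Finset ℕ, wgt q (psi p) = W := by
    apply Function.Injective.tsum_eq psi_injective
    intro S hS
    rcases S.eq_empty_or_nonempty with rfl | h
    · exact absurd (wgt_empty q) hS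
    · obtain ⟨p, hp⟩ := psi_surj_on_nonempty S h
      exact ⟨p, hp⟩
  have hgm : ∀ m : ℕ, Summable (fun k : ℕ => ‖-(q ^ (m + 2 + k))‖) := by
    intro m
    apply Summable.congr
      ((summable_geometric_of_lt_one (norm_nonneg q) hq).mul_left (‖q‖ ^ (m + 2)))
    intro k
    rw [norm_neg, norm_pow]
    exact (pow_add ‖q‖ (m + 2) k).symm
  have hterm : ∀ m : ℕ, ((m : ℂ) + 1) * q ^ (m + 1) * ∏' k : ℕ, (1 - q ^ (m + 1 + (k + 1)))
      = -∑' T : Finset ℕ, wgt q (psi (m, T)) := by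
    intro m
    have h1 : ∏' k : ℕ, (1 - q ^ (m + 1 + (k + 1))) = ∏' k : ℕ, (1 + -(q ^ (m + 2 + k))) :=
      tprod_congr fun k => by rw [show m + 1 + (k + 1) = m + 2 + k from by omega]; ring
    rw [h1, tprod_one_add_complex (hgm m), ← tsum_mul_left, ← tsum_neg]
    apply tsum_congr
    intro T
    rw [wgt_psi, neg_neg]
  have hR : ∑' m : ℕ, ((m : ℂ) + 1) * q ^ (m + 1) * ∏' k : ℕ, (1 - q ^ (m + 1 + (k + 1)))
      = -W := by
    rw [tsum_congr hterm, tsum_neg, ← Summable.tsum_prod' hpsi (fun m => hpsi.prod_factor m), hrange]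
  rw [hR, neg_neg]
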